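/- arXiv:1911.03309 — 4 statements merged into one kernel-verified Lean document; each statement's English description precedes it below -/
import Mathlib

section
/- Let Φ be an irreducible root system in ℚ-vector space V with base Δ and lowest root α₀, and let s be an element of the adjoint torus T̂ (i.e., a homomorphism from the root lattice to ℂ×) of finite order d. Define 𝔖 = {α ∈ Φ : α(s) = ζ_d} for a fixed primitive d-th root of unity ζ_d. Suppose s satisfies α(s) = 1 for α ∈ Δ_a \ 𝒪 and α(s) = ζ_d for α ∈ 𝒪, where 𝒪 ⊆ Δ_a is nonempty with d = Σ_{α ∈ 𝒪} d(α). Then for every β ∈ 𝔖 there exists α ∈ 𝒪 with α ≤_{B'} β, where α ≤_{B'} β means β − α is a nonnegative integer combination of elements of Δ_a \ 𝒪. -/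
open Finset

/-- A (crystallographic, reduced, irreducible) root system in a `ℚ`-vector space,
encoded by its set of roots together with a choice of coroots. -/
structure RootSystemData (V : Type*) [AddCommGroup V] [Module ℚ V] where
  Φ : Set V
  coroot : V → V →ₗ[ℚ] ℚ
  finite : Φ.Finite
  ne_zero : ∀ α ∈ Φ, α ≠ (0 : V)
  span_eq_top : Submodule.span ℚ Φ = ⊤
  coroot_self : ∀ α ∈ Φ, coroot α α = 2
  reflect_mem : ∀ α ∈ Φ, ∀ β ∈ Φ, β - coroot α β • α ∈ Φ
  crystallographic : ∀ α ∈ Φ, ∀ β ∈ Φ, ∃ n : ℤ, coroot α β = (n : ℚ)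
  reduced : ∀ α ∈ Φ, ∀ t : ℚ, t • α ∈ Φ → t = 1 ∨ t = -1
  irreducible : ∀ Φ₁ Φ₂ : Set V, Φ₁ ∪ Φ₂ = Φ → Φ₁ ∩ Φ₂ = ∅ →
    (∀ α ∈ Φ₁, ∀ β ∈ Φ₂, coroot α β = 0) → Φ₁ = ∅ ∨ Φ₂ = ∅

variable {V : Type*} [AddCommGroup V] [Module ℚ V]

/-- `Δ` is a base (set of simple roots) of the root system: it is linearly independent and
every root is a nonnegative or nonpositive integer combination of the simple roots. -/
def RootSystemData.IsBase (R : RootSystemData V) (Δ : Finset V) : Prop :=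
  (↑Δ : Set V) ⊆ R.Φ ∧ LinearIndependent ℚ (fun a : {x : V // x ∈ Δ} => (a : V)) ∧
    ∀ β ∈ R.Φ, (∃ c : V → ℕ, β = ∑ α ∈ Δ, (c α : ℚ) • α) ∨
      (∃ c : V → ℕ, β = -∑ α ∈ Δ, (c α : ℚ) • α)

/-- `β` is a positive root with respect to the base `Δ`. -/
def RootSystemData.IsPos (R : RootSystemData V) (Δ : Finset V) (β : V) : Prop :=
  β ∈ R.Φ ∧ ∃ c : V → ℕ, β = ∑ α ∈ Δ, (c α : ℚ) • α

/-- `θ` is the highest root with respect to `Δ`: a positive root which dominates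
every positive root for the dominance order. -/
def RootSystemData.IsHighest (R : RootSystemData V) (Δ : Finset V) (θ : V) : Prop :=
  R.IsPos Δ θ ∧ ∀ β : V, R.IsPos Δ β → ∃ c : V → ℕ, θ - β = ∑ α ∈ Δ, (c α : ℚ) • α

/-- For $s$ of order $d = \sum_{\alpha\in\mathcal{O}} d(\alpha)$ determined by a nonempty
$\mathcal{O}\subseteq\Delta_a$ ($\alpha(s)=\zeta_d$ on $\mathcal{O}$, $\alpha(s)=1$ on
$\Delta_a\setminus\mathcal{O}$), every root $\beta$ with $\beta(s)=\zeta_d$ lies above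
some $\alpha\in\mathcal{O}$ for the order $\le_{B'}$. -/
theorem stmt_9 {V : Type*} [AddCommGroup V] [Module ℚ V] [DecidableEq V]
    (R : RootSystemData V) (Δ : Finset V) (hΔ : R.IsBase Δ)
    (θ : V) (hθ : R.IsHighest Δ θ)
    (α₀ : V) (hα₀ : α₀ = -θ) (hα₀Δ : α₀ ∉ Δ)
    (dm : V → ℕ) (hd0 : dm α₀ = 1) (hdθ : θ = ∑ α ∈ Δ, (dm α : ℚ) • α)
    (O : Finset V) (hOsub : O ⊆ insert α₀ Δ) (hOne : O.Nonempty)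
    (d : ℕ) (hd : d = ∑ α ∈ O, dm α)
    (ζ : ℂˣ) (hζ : IsPrimitiveRoot ζ d)
    (s : V → ℂˣ) (hs : ∀ x y : V, s (x + y) = s x * s y)
    (hs1 : ∀ α ∈ insert α₀ Δ \ O, s α = 1)
    (hsζ : ∀ α ∈ O, s α = ζ) :
    ∀ β ∈ R.Φ, s β = ζ →
      ∃ α ∈ O, ∃ c : V → ℕ, β - α = ∑ γ ∈ insert α₀ Δ \ O, (c γ : ℚ) • γ := by
    classical
  -- basic homomorphism facts
  have hs0 : s 0 = 1 := by
    have h := hs 0 0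
    rw [add_zero] at h
    exact left_eq_mul.mp h
  have hspow : ∀ (n : ℕ) (x : V), s ((n : ℚ) • x) = s x ^ n := by
    intro n x
    induction n with
    | zero => simpa using hs0
    | succ n ih =>
      have h1 : ((n + 1 : ℕ) : ℚ) • x = (n : ℚ) • x + x := by
        push_cast
        rw [add_smul, one_smul]
      rw [h1, hs, ih, pow_succ]
  have hsprod : ∀ (G : Finset V) (c : V → ℕ),
      s (∑ δ ∈ G, (c δ : ℚ) • δ) = ∏ δ ∈ G, s δ ^ c δ := by
    intro G c
    induction G using Finset.induction with
    | empty => simpa using hs0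
    | insert a t hx ih =>
      rw [Finset.sum_insert hx, Finset.prod_insert hx, hs, hspow, ih]
  have hsneg : ∀ x : V, s (-x) = (s x)⁻¹ := by
    intro x
    have h := hs x (-x)
    rw [add_neg_cancel, hs0] at h
    exact eq_inv_of_mul_eq_one_right h.symm
  -- linear independence extraction
  have lin : ∀ f : V → ℚ, ∑ δ ∈ Δ, f δ • δ = 0 → ∀ δ ∈ Δ, f δ = 0 := by
    intro f hsum δ hδ
    have li := hΔ.2.1
    rw [linearIndependent_iff'] at li
    have h2 : ∑ a ∈ (Finset.univ : Finset {x : V // x ∈ Δ}), f (a : V) • (a : V) = 0 := by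
      rw [Finset.univ_eq_attach, Finset.sum_attach Δ (fun x => f x • x)]
      exact hsum
    exact li Finset.univ (fun a => f (a : V)) h2 ⟨δ, hδ⟩ (Finset.mem_univ _)
  -- coefficient bound: positive-root coefficients are at most the marks
  have bound : ∀ c : V → ℕ, (∑ δ ∈ Δ, (c δ : ℚ) • δ) ∈ R.Φ → ∀ δ ∈ Δ, c δ ≤ dm δ := by
    intro c hmem δ hδ
    obtain ⟨e, he⟩ := hθ.2 _ ⟨hmem, c, rfl⟩
    have h0 : ∑ γ ∈ Δ, ((dm γ : ℚ) - (c γ : ℚ) - (e γ : ℚ)) • γ = 0 := by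
      simp only [sub_smul, Finset.sum_sub_distrib]
      rw [← hdθ, he, sub_self]
    have h1 := lin _ h0 δ hδ
    have h2 : (c δ : ℚ) ≤ (dm δ : ℚ) := by
      have h3 : (0 : ℚ) ≤ (e δ : ℚ) := Nat.cast_nonneg _
      linarith
    exact_mod_cast h2
  -- indicator sums
  have hind : ∀ a ∈ Δ, ∑ δ ∈ Δ, (if δ = a then (1 : ℚ) else 0) • δ = a := by
    intro a ha
    simp only [ite_smul, one_smul, zero_smul]
    rw [Finset.sum_ite_eq' Δ a (fun δ => δ), if_pos ha]
  -- values of s on Δ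
  have hsIn : ∀ δ ∈ O, s δ = ζ := hsζ
  have hsOut : ∀ δ ∈ Δ, δ ∉ O → s δ = 1 := fun δ hδ h =>
    hs1 δ (Finset.mem_sdiff.mpr ⟨Finset.mem_insert_of_mem hδ, h⟩)
  set F : Finset V := Δ.filter (· ∈ O) with hF
  have hprod : ∀ c : V → ℕ, ∏ δ ∈ Δ, s δ ^ c δ = ζ ^ (∑ δ ∈ F, c δ) := by
    intro c
    rw [← Finset.prod_filter_mul_prod_filter_not Δ (· ∈ O)]
    have h1 : ∏ δ ∈ Δ.filter (· ∈ O), s δ ^ c δ = ∏ δ ∈ Δ.filter (· ∈ O), (ζ : ℂˣ) ^ c δ :=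
      Finset.prod_congr rfl fun δ hδ => by
        rw [hsIn δ (Finset.mem_filter.mp hδ).2]
    have h2 : ∏ δ ∈ Δ.filter (fun δ => ¬ δ ∈ O), s δ ^ c δ = 1 :=
      Finset.prod_eq_one fun δ hδ => by
        rw [hsOut δ (Finset.mem_filter.mp hδ).1 (Finset.mem_filter.mp hδ).2, one_pow]
    rw [h1, h2, mul_one, Finset.prod_pow_eq_pow_sum]
  -- F = O.erase α₀ and the relation between d and the sum of marks over F
  have hFO : F = O.erase α₀ := by
    ext x
    simp only [hF, Finset.mem_filter, Finset.mem_erase]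
    constructor
    · rintro ⟨hxΔ, hxO⟩
      exact ⟨fun h => hα₀Δ (h ▸ hxΔ), hxO⟩
    · rintro ⟨hne, hxO⟩
      rcases Finset.mem_insert.mp (hOsub hxO) with h | h
      · exact absurd h hne
      · exact ⟨h, hxO⟩
  have hdD : d = (∑ δ ∈ F, dm δ) + (if α₀ ∈ O then 1 else 0) := by
    rw [hFO]
    by_cases hm : α₀ ∈ O
    · rw [if_pos hm, hd, ← Finset.add_sum_erase O dm hm, hd0, add_comm]
    · rw [if_neg hm, Finset.erase_eq_of_notMem hm, hd, add_zero]
  -- extraction of a unique support element from a sum equal to one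
  have exists_one : ∀ f : V → ℕ, ∑ δ ∈ F, f δ = 1 →
      ∃ a, a ∈ F ∧ f a = 1 ∧ ∀ δ ∈ F, δ ≠ a → f δ = 0 := by
    intro f hsum
    obtain ⟨a, haF, hane⟩ := Finset.exists_ne_zero_of_sum_ne_zero
      (s := F) (f := f) (by rw [hsum]; exact one_ne_zero)
    have hsplit : f a + ∑ δ ∈ F.erase a, f δ = 1 := by
      rw [Finset.add_sum_erase F f haF, hsum]
    have hfa : f a = 1 := by omega
    have hrest : ∑ δ ∈ F.erase a, f δ = 0 := by omega
    exact ⟨a, haF, hfa, fun δ hδ hne =>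
      Finset.sum_eq_zero_iff.mp hrest δ (Finset.mem_erase.mpr ⟨hne, hδ⟩)⟩
  -- the final packaging lemma
  have FINAL : ∀ (w : V) (n₀ : ℕ) (f : V → ℕ) (g : V → ℚ),
      (α₀ ∈ O → n₀ = 0) → (∀ δ ∈ Δ, δ ∈ O → f δ = 0) →
      w = ∑ δ ∈ Δ, g δ • δ →
      (∀ δ ∈ Δ, g δ = -(n₀ : ℚ) * (dm δ : ℚ) + (f δ : ℚ)) →
      ∃ c : V → ℕ, w = ∑ γ ∈ insert α₀ Δ \ O, (c γ : ℚ) • γ := by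
    intro w n₀ f g hn₀ hf hw hgf
    have hw2 : w = (n₀ : ℚ) • α₀ + ∑ δ ∈ Δ, (f δ : ℚ) • δ := by
      rw [hw, hα₀, hdθ, smul_neg, Finset.smul_sum, ← Finset.sum_neg_distrib,
        ← Finset.sum_add_distrib]
      refine Finset.sum_congr rfl fun δ hδ => ?_
      rw [hgf δ hδ]
      module
    refine ⟨fun γ => if γ = α₀ then n₀ else f γ, ?_⟩
    have hDO : ∑ γ ∈ Δ \ O, ((if γ = α₀ then n₀ else f γ : ℕ) : ℚ) • γ
        = ∑ δ ∈ Δ, (f δ : ℚ) • δ := by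
      rw [Finset.sum_subset (Finset.sdiff_subset)]
      · exact Finset.sum_congr rfl fun δ hδ => by
          rw [if_neg (show ¬ δ = α₀ from fun h => hα₀Δ (h ▸ hδ))]
      · intro x hx hx'
        have hxO : x ∈ O := by
          by_contra h
          exact hx' (Finset.mem_sdiff.mpr ⟨hx, h⟩)
        rw [if_neg (show ¬ x = α₀ from fun h => hα₀Δ (h ▸ hx)), hf x hx hxO,
          Nat.cast_zero, zero_smul]
    by_cases hm : α₀ ∈ O
    · have hS : insert α₀ Δ \ O = Δ \ O := by
        ext x
        simp only [Finset.mem_sdiff, Finset.mem_insert]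
        constructor
        · rintro ⟨rfl | h1, h2⟩
          · exact absurd hm h2
          · exact ⟨h1, h2⟩
        · rintro ⟨h1, h2⟩
          exact ⟨Or.inr h1, h2⟩
      rw [hS]
      beta_reduce
      rw [hDO, hw2, hn₀ hm, Nat.cast_zero, zero_smul, zero_add]
    · have hS : insert α₀ Δ \ O = insert α₀ (Δ \ O) := by
        ext x
        simp only [Finset.mem_sdiff, Finset.mem_insert]
        constructor
        · rintro ⟨rfl | h1, h2⟩
          · exact Or.inl rfl
          · exact Or.inr ⟨h1, h2⟩
        · rintro (rfl | ⟨h1, h2⟩)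
          · exact ⟨Or.inl rfl, hm⟩
          · exact ⟨Or.inr h1, h2⟩
      rw [hS]
      beta_reduce
      rw [Finset.sum_insert (show α₀ ∉ Δ \ O from fun h => hα₀Δ (Finset.mem_sdiff.mp h).1),
        if_pos rfl, hDO, hw2]
  -- main argument
  intro β hβ hsβ
  rcases hΔ.2.2 β hβ with ⟨c, hc⟩ | ⟨c, hc⟩
  · -- β positive
    have hβmem : (∑ δ ∈ Δ, (c δ : ℚ) • δ) ∈ R.Φ := hc ▸ hβ
    have hcb : ∀ δ ∈ Δ, c δ ≤ dm δ := bound c hβmem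
    have hkD : ∑ δ ∈ F, c δ ≤ ∑ δ ∈ F, dm δ :=
      Finset.sum_le_sum fun δ hδ => hcb δ (Finset.mem_filter.mp hδ).1
    have hζk : ζ ^ (∑ δ ∈ F, c δ) = ζ := by
      have h := hsβ
      rw [hc, hsprod, hprod] at h
      exact h
    by_cases hk0 : ∑ δ ∈ F, c δ = 0
    · -- forces d = 1
      have hζ1 : ζ ^ 1 = 1 := by
        rw [pow_one, ← hζk, hk0, pow_zero]
      have hd1 : d = 1 := Nat.dvd_one.mp ((hζ.pow_eq_one_iff_dvd 1).mp hζ1)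
      have hc0 : ∀ δ ∈ Δ, δ ∈ O → c δ = 0 := fun δ hδ hδO =>
        Finset.sum_eq_zero_iff.mp hk0 δ (Finset.mem_filter.mpr ⟨hδ, hδO⟩)
      by_cases hm : α₀ ∈ O
      · have hdD' : d = (∑ δ ∈ F, dm δ) + 1 := by rw [hdD, if_pos hm]
        have hD0 : ∑ δ ∈ F, dm δ = 0 := by omega
        have hdm0 : ∀ δ ∈ Δ, δ ∈ O → dm δ = 0 := fun δ hδ hδO =>
          Finset.sum_eq_zero_iff.mp hD0 δ (Finset.mem_filter.mpr ⟨hδ, hδO⟩)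
        refine ⟨α₀, hm, ?_⟩
        refine FINAL (β - α₀) 0 (fun δ => c δ + dm δ) (fun δ => (c δ : ℚ) + (dm δ : ℚ))
          (fun _ => rfl) ?_ ?_ ?_
        · intro δ hδ hδO
          beta_reduce
          rw [hc0 δ hδ hδO, hdm0 δ hδ hδO]
        · rw [hc, hα₀, sub_neg_eq_add, hdθ, ← Finset.sum_add_distrib]
          exact Finset.sum_congr rfl fun δ _ => (add_smul _ _ _).symm
        · intro δ hδ
          beta_reduce
          push_cast
          ring
      · have hdD' : d = ∑ δ ∈ F, dm δ := by rw [hdD, if_neg hm, add_zero]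
        have hD1 : ∑ δ ∈ F, dm δ = 1 := by omega
        obtain ⟨γ, hγF, hγ1, hγ0⟩ := exists_one dm hD1
        have hγΔ := (Finset.mem_filter.mp hγF).1
        have hγO := (Finset.mem_filter.mp hγF).2
        refine ⟨γ, hγO, ?_⟩
        refine FINAL (β - γ) 1 (fun δ => if δ ∈ O then 0 else c δ + dm δ)
          (fun δ => (c δ : ℚ) - (if δ = γ then 1 else 0))
          (fun h => absurd h hm) ?_ ?_ ?_
        · intro δ hδ hδO
          beta_reduce
          rw [if_pos hδO]
        · rw [hc]
          simp only [sub_smul, Finset.sum_sub_distrib]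
          rw [hind γ hγΔ]
        · intro δ hδ
          beta_reduce
          by_cases hδγ : δ = γ
          · subst hδγ
            rw [if_pos rfl, if_pos hγO, hc0 δ hδ hγO, hγ1]
            norm_num
          · rw [if_neg hδγ]
            by_cases hδO : δ ∈ O
            · rw [if_pos hδO, hc0 δ hδ hδO,
                hγ0 δ (Finset.mem_filter.mpr ⟨hδ, hδO⟩) hδγ]
              norm_num
            · rw [if_neg hδO]
              push_cast
              ring
    · -- k ≥ 1 forces k = 1
      have h1 : ζ ^ (∑ δ ∈ F, c δ - 1) * ζ = ζ := by
        rw [← pow_succ, Nat.sub_add_cancel (Nat.one_le_iff_ne_zero.mpr hk0), hζk]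
      have h2 : ζ ^ (∑ δ ∈ F, c δ - 1) = 1 := by
        have := mul_right_cancel (b := ζ) (by rw [h1, one_mul] :
          ζ ^ (∑ δ ∈ F, c δ - 1) * ζ = 1 * ζ)
        exact this
      obtain ⟨m, hm'⟩ := (hζ.pow_eq_one_iff_dvd _).mp h2
      have hDd : ∑ δ ∈ F, dm δ ≤ d := by
        by_cases hmm : α₀ ∈ O
        · rw [hdD, if_pos hmm]; omega
        · rw [hdD, if_neg hmm]; omega
      have hkd : ∑ δ ∈ F, c δ ≤ d := le_trans hkD hDd
      have hk1 : ∑ δ ∈ F, c δ = 1 := by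
        rcases Nat.eq_zero_or_pos m with hm0 | hmpos
        · rw [hm0, Nat.mul_zero] at hm'
          omega
        · have hle : d ≤ d * m := Nat.le_mul_of_pos_right d hmpos
          omega
      obtain ⟨a, haF, ha1, ha0⟩ := exists_one c hk1
      have haΔ := (Finset.mem_filter.mp haF).1
      have haO := (Finset.mem_filter.mp haF).2
      refine ⟨a, haO, ?_⟩
      refine FINAL (β - a) 0 (fun δ => if δ ∈ O then 0 else c δ)
        (fun δ => (c δ : ℚ) - (if δ = a then 1 else 0)) (fun _ => rfl) ?_ ?_ ?_
      · intro δ hδ hδO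
        beta_reduce
        rw [if_pos hδO]
      · rw [hc]
        simp only [sub_smul, Finset.sum_sub_distrib]
        rw [hind a haΔ]
      · intro δ hδ
        beta_reduce
        by_cases hδa : δ = a
        · subst hδa
          rw [if_pos rfl, if_pos haO, ha1]
          norm_num
        · rw [if_neg hδa]
          by_cases hδO : δ ∈ O
          · rw [if_pos hδO, ha0 δ (Finset.mem_filter.mpr ⟨hδ, hδO⟩) hδa]
            norm_num
          · rw [if_neg hδO]
            push_cast
            ring
  · -- β negative
    have hnegβ : -β ∈ R.Φ := by
      have h := R.reflect_mem β hβ β hβ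
      rw [R.coroot_self β hβ] at h
      have h2 : β - (2 : ℚ) • β = -β := by module
      rwa [h2] at h
    have hnb : -β = ∑ δ ∈ Δ, (c δ : ℚ) • δ := by rw [hc, neg_neg]
    have hmem : (∑ δ ∈ Δ, (c δ : ℚ) • δ) ∈ R.Φ := hnb ▸ hnegβ
    have hcb : ∀ δ ∈ Δ, c δ ≤ dm δ := bound c hmem
    have hkD : ∑ δ ∈ F, c δ ≤ ∑ δ ∈ F, dm δ :=
      Finset.sum_le_sum fun δ hδ => hcb δ (Finset.mem_filter.mp hδ).1
    have hsnb : s (-β) = ζ ^ (∑ δ ∈ F, c δ) := by rw [hnb, hsprod, hprod]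
    have hζk : ζ ^ (∑ δ ∈ F, c δ + 1) = 1 := by
      rw [pow_succ, ← hsnb, ← hsβ, ← hs, neg_add_cancel, hs0]
    obtain ⟨m, hm'⟩ := (hζ.pow_eq_one_iff_dvd _).mp hζk
    by_cases hmO : α₀ ∈ O
    · have hdD' : d = (∑ δ ∈ F, dm δ) + 1 := by rw [hdD, if_pos hmO]
      have hkd : ∑ δ ∈ F, c δ = ∑ δ ∈ F, dm δ := by
        rcases Nat.eq_zero_or_pos m with hm0 | hmpos
        · rw [hm0, Nat.mul_zero] at hm'
          omega
        · have hle : d ≤ d * m := Nat.le_mul_of_pos_right d hmpos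
          omega
      have hceq : ∀ δ ∈ F, c δ = dm δ :=
        (Finset.sum_eq_sum_iff_of_le fun δ hδ =>
          hcb δ (Finset.mem_filter.mp hδ).1).mp hkd
      refine ⟨α₀, hmO, ?_⟩
      refine FINAL (β - α₀) 0 (fun δ => dm δ - c δ) (fun δ => (dm δ : ℚ) - (c δ : ℚ))
        (fun _ => rfl) ?_ ?_ ?_
      · intro δ hδ hδO
        beta_reduce
        rw [hceq δ (Finset.mem_filter.mpr ⟨hδ, hδO⟩)]
        exact Nat.sub_self _
      · rw [hc, hα₀, sub_neg_eq_add, hdθ]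
        simp only [sub_smul, Finset.sum_sub_distrib]
        abel
      · intro δ hδ
        beta_reduce
        rw [Nat.cast_sub (hcb δ hδ)]
        push_cast
        ring
    · have hdD' : d = ∑ δ ∈ F, dm δ := by rw [hdD, if_neg hmO, add_zero]
      have hdpos : 0 < d := by
        rcases Nat.eq_zero_or_pos d with h0 | hpos
        · exfalso
          have hk0 : ∑ δ ∈ F, c δ = 0 := by omega
          rw [h0, Nat.zero_mul] at hm'
          omega
        · exact hpos
      have hcase : ∑ δ ∈ F, c δ + 1 = d ∨ (d = 1 ∧ ∑ δ ∈ F, c δ = 1) := by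
        match m, hm' with
        | 0, hm' => omega
        | 1, hm' => left; omega
        | (m + 2), hm' =>
          right
          rw [show d * (m + 2) = d * m + 2 * d by ring] at hm'
          have hnn : 0 ≤ d * m := Nat.zero_le _
          constructor <;> omega
      rcases hcase with hcase | ⟨hd1, hk1⟩
      · -- sum of (dm - c) over F equals 1
        have hsplit : ∑ δ ∈ F, (dm δ - c δ) = 1 := by
          have hadd : ∑ δ ∈ F, (dm δ - c δ) + ∑ δ ∈ F, c δ = ∑ δ ∈ F, dm δ := by
            rw [← Finset.sum_add_distrib]
            exact Finset.sum_congr rfl fun δ hδ =>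
              Nat.sub_add_cancel (hcb δ (Finset.mem_filter.mp hδ).1)
          omega
        obtain ⟨a, haF, ha1, ha0⟩ := exists_one _ hsplit
        have haΔ := (Finset.mem_filter.mp haF).1
        have haO := (Finset.mem_filter.mp haF).2
        refine ⟨a, haO, ?_⟩
        refine FINAL (β - a) 1 (fun δ => if δ ∈ O then 0 else dm δ - c δ)
          (fun δ => -(c δ : ℚ) - (if δ = a then 1 else 0))
          (fun h => absurd h hmO) ?_ ?_ ?_
        · intro δ hδ hδO
          beta_reduce
          rw [if_pos hδO]
        · rw [hc]
          simp only [sub_smul, neg_smul, Finset.sum_sub_distrib, Finset.sum_neg_distrib]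
          rw [hind a haΔ]
        · intro δ hδ
          beta_reduce
          by_cases hδa : δ = a
          · subst hδa
            have hda : dm δ = c δ + 1 := by
              have := hcb δ hδ
              omega
            rw [if_pos rfl, if_pos haO, hda]
            push_cast
            ring
          · rw [if_neg hδa]
            by_cases hδO : δ ∈ O
            · have hdc : dm δ = c δ := by
                have h0 := ha0 δ (Finset.mem_filter.mpr ⟨hδ, hδO⟩) hδa
                have := hcb δ hδ
                omega
              rw [if_pos hδO, hdc]
              push_cast
              ring
            · rw [if_neg hδO, Nat.cast_sub (hcb δ hδ)]
              push_cast
              ring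
      · -- d = 1, k = 1
        have hD1 : ∑ δ ∈ F, dm δ = 1 := by omega
        obtain ⟨γ, hγF, hγ1, hγ0⟩ := exists_one dm hD1
        have hγΔ := (Finset.mem_filter.mp hγF).1
        have hγO := (Finset.mem_filter.mp hγF).2
        have hkd2 : ∑ δ ∈ F, c δ = ∑ δ ∈ F, dm δ := by omega
        have hceq : ∀ δ ∈ F, c δ = dm δ :=
          (Finset.sum_eq_sum_iff_of_le (s := F) fun δ hδ =>
            hcb δ (Finset.mem_filter.mp hδ).1).mp hkd2
        refine ⟨γ, hγO, ?_⟩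
        refine FINAL (β - γ) 2 (fun δ => if δ ∈ O then 0 else 2 * dm δ - c δ)
          (fun δ => -(c δ : ℚ) - (if δ = γ then 1 else 0))
          (fun h => absurd h hmO) ?_ ?_ ?_
        · intro δ hδ hδO
          beta_reduce
          rw [if_pos hδO]
        · rw [hc]
          simp only [sub_smul, neg_smul, Finset.sum_sub_distrib, Finset.sum_neg_distrib]
          rw [hind γ hγΔ]
        · intro δ hδ
          beta_reduce
          by_cases hδγ : δ = γ
          · subst hδγ
            rw [if_pos rfl, if_pos hγO, hceq δ (Finset.mem_filter.mpr ⟨hδ, hγO⟩), hγ1]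
            push_cast
            ring
          · rw [if_neg hδγ]
            by_cases hδO : δ ∈ O
            · have hdc : dm δ = 0 := hγ0 δ (Finset.mem_filter.mpr ⟨hδ, hδO⟩) hδγ
              have hcc : c δ = 0 := by
                have := hceq δ (Finset.mem_filter.mpr ⟨hδ, hδO⟩)
                omega
              rw [if_pos hδO, hdc, hcc]
              push_cast
              ring
            · have hle : c δ ≤ 2 * dm δ := by
                have := hcb δ hδ
                omega
              rw [if_neg hδO, Nat.cast_sub hle]
              push_cast
              ring
end

section
/- In the setting of the previous statement (s of order d determined by a nonempty subset 𝒪 ⊆ Δ_a with d = Σ_{α ∈ 𝒪} d(α), via α(s) = ζ_d for α ∈ 𝒪 and α(s) = 1 for α ∈ Δ_a \ 𝒪), the set 𝒪 equals the set of minimal elements of 𝔖 = {α ∈ Φ : α(s) = ζ_d} for the partial order ≤_{B'}. -/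
open Finset

section Aux

variable {V : Type*} [AddCommGroup V] [Module ℚ V]

lemma coords_zero {Δ : Finset V}
    (hli : LinearIndependent ℚ (fun a : {x : V // x ∈ Δ} => (a : V)))
    (f : V → ℚ) (h : ∑ α ∈ Δ, f α • α = 0) : ∀ α ∈ Δ, f α = 0 := by
  intro α hα
  have h' : ∑ x ∈ Δ.attach, f x.1 • (x.1 : V) = 0 := by
    rw [Finset.sum_attach Δ (fun y => f y • y)]; exact h
  exact Fintype.linearIndependent_iff.mp hli (fun x => f x.1)
    (by rwa [Finset.univ_eq_attach]) ⟨α, hα⟩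

lemma coords_eq {Δ : Finset V}
    (hli : LinearIndependent ℚ (fun a : {x : V // x ∈ Δ} => (a : V)))
    (f g : V → ℚ) (h : ∑ α ∈ Δ, f α • α = ∑ α ∈ Δ, g α • α) :
    ∀ α ∈ Δ, f α = g α := by
  intro α hα
  have h0 : ∑ α ∈ Δ, (f α - g α) • α = 0 := by
    simp only [sub_smul, Finset.sum_sub_distrib, h, sub_self]
  have := coords_zero hli (fun x => f x - g x) h0 α hα
  linarith [show f α - g α = 0 from this]

end Aux


variable {V : Type*} [AddCommGroup V] [Module ℚ V]

/-- $\mathcal{O}$ is exactly the set of minimal elements of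
$\mathfrak{S} = \{\alpha \in \Phi : \alpha(s) = \zeta_d\}$ for the order $\le_{B'}$. -/
theorem stmt_10 {V : Type*} [AddCommGroup V] [Module ℚ V] [DecidableEq V]
    (R : RootSystemData V) (Δ : Finset V) (hΔ : R.IsBase Δ)
    (θ : V) (hθ : R.IsHighest Δ θ)
    (α₀ : V) (hα₀ : α₀ = -θ) (hα₀Δ : α₀ ∉ Δ)
    (dm : V → ℕ) (hd0 : dm α₀ = 1) (hdθ : θ = ∑ α ∈ Δ, (dm α : ℚ) • α)
    (O : Finset V) (hOsub : O ⊆ insert α₀ Δ) (hOne : O.Nonempty)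
    (d : ℕ) (hd : d = ∑ α ∈ O, dm α)
    (ζ : ℂˣ) (hζ : IsPrimitiveRoot ζ d)
    (s : V → ℂˣ) (hs : ∀ x y : V, s (x + y) = s x * s y)
    (hs1 : ∀ α ∈ insert α₀ Δ \ O, s α = 1)
    (hsζ : ∀ α ∈ O, s α = ζ) :
    ∀ β : V, β ∈ O ↔
      (β ∈ R.Φ ∧ s β = ζ ∧ ∀ γ ∈ R.Φ, s γ = ζ →
        (∃ c : V → ℕ, β - γ = ∑ x ∈ insert α₀ Δ \ O, (c x : ℚ) • x) → γ = β) := by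
  
  obtain ⟨hΔΦ, hli, hbase⟩ := hΔ
  have hθΦ : θ ∈ R.Φ := hθ.1.1
  have hhigh : ∀ β : V, (β ∈ R.Φ ∧ ∃ c : V → ℕ, β = ∑ α ∈ Δ, (c α : ℚ) • α) →
      ∃ c : V → ℕ, θ - β = ∑ α ∈ Δ, (c α : ℚ) • α := hθ.2
  set Δₐ : Finset V := insert α₀ Δ with hΔₐdef
  -- s of zero and powers
  have hs0 : s 0 = 1 := by
    have h := hs 0 0
    rw [add_zero] at h
    exact (mul_left_cancel (a := s 0) (by rw [mul_one]; exact h)).symm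
  have hspow : ∀ (x : V) (n : ℕ), s ((n : ℚ) • x) = s x ^ n := by
    intro x n
    induction n with
    | zero => simpa using hs0
    | succ n ih =>
      rw [Nat.cast_add, Nat.cast_one, add_smul, one_smul, hs, ih, pow_succ]
  have hsprod : ∀ (T : Finset V) (c : V → ℕ),
      s (∑ x ∈ T, (c x : ℚ) • x) = ∏ x ∈ T, s x ^ c x := by
    intro T c
    induction T using Finset.induction_on with
    | empty => simpa using hs0
    | insert _ _ h ih =>
      rw [Finset.sum_insert h, hs, hspow, ih, Finset.prod_insert h]
  -- marks are positive on Δ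
  have hdm1 : ∀ α ∈ Δ, 1 ≤ dm α := by
    intro α hα
    have hαrep : α = ∑ x ∈ Δ, ((if x = α then (1:ℕ) else 0 : ℕ) : ℚ) • x := by
      rw [Finset.sum_eq_single_of_mem α hα (fun b _ hb => by simp [hb])]
      simp
    obtain ⟨e, he⟩ := hhigh α ⟨hΔΦ hα, ⟨_, hαrep⟩⟩
    have hsum : ∑ x ∈ Δ, (dm x : ℚ) • x
        = ∑ x ∈ Δ, ((e x : ℚ) + (if x = α then (1:ℕ) else 0 : ℕ)) • x := by
      simp only [add_smul, Finset.sum_add_distrib]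
      rw [← hαrep, ← he, ← hdθ]
      abel
    have := coords_eq hli _ _ hsum α hα
    simp only [if_pos rfl, Nat.cast_one] at this
    have : (dm α : ℚ) = e α + 1 := this
    have h2 : dm α = e α + 1 := by exact_mod_cast this
    omega
  -- negatives of roots are roots
  have hneg : ∀ β ∈ R.Φ, -β ∈ R.Φ := by
    intro β hβ
    have h := R.reflect_mem β hβ β hβ
    rw [R.coroot_self β hβ] at h
    have : β - (2 : ℚ) • β = -β := by
      rw [two_smul]; abel
    rwa [this] at h
  have hα₀Φ : α₀ ∈ R.Φ := hα₀ ▸ hneg θ hθΦ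
  have hΔₐΦ : ∀ x ∈ Δₐ, x ∈ R.Φ := by
    intro x hx
    rcases Finset.mem_insert.mp hx with h | h
    · exact h ▸ hα₀Φ
    · exact hΔΦ h
  -- canonical bounded representation
  have hcanon : ∀ β ∈ R.Φ, ∃ b : V → ℕ,
      β = ∑ x ∈ Δₐ, (b x : ℚ) • x ∧ ∀ x ∈ Δₐ, b x ≤ dm x := by
    intro β hβ
    rcases hbase β hβ with ⟨c, hc⟩ | ⟨c, hc⟩
    · obtain ⟨e, he⟩ := hhigh β ⟨hβ, c, hc⟩
      refine ⟨fun x => if x ∈ Δ then c x else 0, ?_, ?_⟩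
      · beta_reduce
        rw [hΔₐdef, Finset.sum_insert hα₀Δ, if_neg hα₀Δ, hc]
        rw [Nat.cast_zero, zero_smul, zero_add]
        exact Finset.sum_congr rfl fun x hx => by rw [if_pos hx]
      · intro x hx
        beta_reduce
        rcases Finset.mem_insert.mp hx with rfl | hx
        · simp [hα₀Δ]
        · rw [if_pos hx]
          have hsum : ∑ y ∈ Δ, (dm y : ℚ) • y = ∑ y ∈ Δ, ((c y : ℚ) + (e y : ℚ)) • y := by
            simp only [add_smul, Finset.sum_add_distrib]
            rw [← hc, ← he, ← hdθ]; abel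
          have h1 := coords_eq hli _ _ hsum x hx
          have h2 : dm x = c x + e x := by exact_mod_cast h1
          omega
    · have hnβΦ : -β ∈ R.Φ := hneg β hβ
      have hnβrep : -β = ∑ α ∈ Δ, (c α : ℚ) • α := by rw [hc, neg_neg]
      obtain ⟨e, he⟩ := hhigh (-β) ⟨hnβΦ, c, hnβrep⟩
      refine ⟨fun x => if x ∈ Δ then e x else 1, ?_, ?_⟩
      · beta_reduce
        rw [hΔₐdef, Finset.sum_insert hα₀Δ, if_neg hα₀Δ]
        have h1 : ∑ x ∈ Δ, ((if x ∈ Δ then e x else 1 : ℕ) : ℚ) • x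
            = ∑ x ∈ Δ, (e x : ℚ) • x :=
          Finset.sum_congr rfl fun x hx => by rw [if_pos hx]
        rw [h1, ← he, hα₀, Nat.cast_one, one_smul]
        abel
      · intro x hx
        beta_reduce
        rcases Finset.mem_insert.mp hx with rfl | hx
        · simp [hα₀Δ, hd0]
        · rw [if_pos hx]
          have hsum : ∑ y ∈ Δ, (dm y : ℚ) • y = ∑ y ∈ Δ, ((e y : ℚ) + (c y : ℚ)) • y := by
            simp only [add_smul, Finset.sum_add_distrib]
            rw [← he, ← hnβrep, ← hdθ]; abel
          have h1 := coords_eq hli _ _ hsum x hx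
          have h2 : dm x = e x + c x := by exact_mod_cast h1
          omega
  -- value of s on a combination over Δₐ
  have hsval : ∀ b : V → ℕ, s (∑ x ∈ Δₐ, (b x : ℚ) • x) = ζ ^ (∑ x ∈ O, b x) := by
    intro b
    rw [hsprod, ← Finset.prod_sdiff hOsub]
    have h1 : ∏ x ∈ Δₐ \ O, s x ^ b x = 1 :=
      Finset.prod_eq_one fun x hx => by rw [hs1 x hx, one_pow]
    have h2 : ∏ x ∈ O, s x ^ b x = ζ ^ ∑ x ∈ O, b x := by
      rw [← Finset.prod_pow_eq_pow_sum]
      exact Finset.prod_congr rfl fun x hx => by rw [hsζ x hx]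
    rw [h1, h2, one_mul]
  -- positivity of d
  have hdpos : 0 < d := by
    obtain ⟨a, ha⟩ := hOne
    have h1 : 1 ≤ dm a := by
      rcases Finset.mem_insert.mp (hOsub ha) with h | h
      · rw [h, hd0]
      · exact hdm1 a h
    have h2 : dm a ≤ ∑ x ∈ O, dm x :=
      Finset.single_le_sum (fun x _ => Nat.zero_le _) ha
    omega
  -- modular arithmetic fact
  have hmod : ∀ k : ℕ, k ≤ d → ζ ^ k = ζ → k = 1 ∨ (k = 0 ∧ d = 1) := by
    intro k hk hzk
    have hz1 : ζ ^ ((k : ℤ) - 1) = 1 := by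
      rw [zpow_sub, zpow_one, zpow_natCast, hzk, mul_inv_cancel]
    obtain ⟨m, hm⟩ := (hζ.zpow_eq_one_iff_dvd _).mp hz1
    rcases le_or_gt m (-1) with h | h
    · have h1 : (d : ℤ) * m ≤ (d : ℤ) * (-1) :=
        mul_le_mul_of_nonneg_left h (by positivity)
      rw [mul_neg_one, ← hm] at h1
      have hk0 : k = 0 := by omega
      right
      refine ⟨hk0, ?_⟩
      rw [hk0] at hm
      push_cast at hm
      have hdvd : (d : ℤ) ∣ 1 := ⟨-m, by rw [mul_neg, ← hm]; ring⟩
      have := Int.le_of_dvd one_pos hdvd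
      omega
    · rcases eq_or_lt_of_le (by omega : (0:ℤ) ≤ m) with heq | hlt
      · rw [← heq, mul_zero] at hm
        left; omega
      · have h1 : (d : ℤ) * 1 ≤ (d : ℤ) * m :=
          mul_le_mul_of_nonneg_left (by omega) (by positivity)
        rw [mul_one, ← hm] at h1
        omega
  -- the fundamental relation among elements of Δₐ
  have hrel : ∑ x ∈ Δₐ, (dm x : ℚ) • x = 0 := by
    rw [hΔₐdef, Finset.sum_insert hα₀Δ, hd0, hα₀, ← hdθ, Nat.cast_one, one_smul]
    abel
  -- uniqueness of coordinates up to multiples of the relation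
  have huniq : ∀ f g : V → ℚ, (∑ x ∈ Δₐ, f x • x = ∑ x ∈ Δₐ, g x • x) →
      ∀ x ∈ Δₐ, f x - g x = (f α₀ - g α₀) * dm x := by
    intro f g hfg x hx
    rw [hΔₐdef, Finset.sum_insert hα₀Δ, Finset.sum_insert hα₀Δ] at hfg
    have h1 : ∑ y ∈ Δ, ((f y - g y) - (f α₀ - g α₀) * dm y) • y = 0 := by
      have hα₀eq : (f α₀ - g α₀) • α₀ = -∑ y ∈ Δ, ((f α₀ - g α₀) * (dm y : ℚ)) • y := by
        rw [hα₀, hdθ, smul_neg, Finset.smul_sum]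
        congr 1
        exact Finset.sum_congr rfl fun y _ => by rw [smul_smul]
      have h0 : ∑ y ∈ Δ, (f y - g y) • y + (f α₀ - g α₀) • α₀ = 0 := by
        rw [← sub_eq_zero] at hfg
        simp only [sub_smul, Finset.sum_sub_distrib]
        abel_nf at hfg ⊢
        exact hfg
      rw [hα₀eq] at h0
      simp only [sub_smul, Finset.sum_sub_distrib] at h0 ⊢
      abel_nf at h0 ⊢
      exact h0
    rcases Finset.mem_insert.mp hx with rfl | hx
    · rw [hd0, Nat.cast_one, mul_one]
    · have h2 := coords_zero hli _ h1 x hx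
      linarith [h2]
  -- indicator representation of elements of Δₐ
  have hindic : ∀ β ∈ Δₐ, β = ∑ x ∈ Δₐ, ((if x = β then (1:ℕ) else 0 : ℕ) : ℚ) • x := by
    intro β hβ
    rw [Finset.sum_eq_single_of_mem β hβ (fun b _ hb => by simp [hb])]
    simp
  have hΔne : Δ.Nonempty := by
    rcases Finset.eq_empty_or_nonempty Δ with rfl | h
    · exact absurd (by simpa using hdθ) (R.ne_zero θ hθΦ)
    · exact h
  have hdmΔₐ : ∀ x ∈ Δₐ, 1 ≤ dm x := by
    intro x hx
    rcases Finset.mem_insert.mp hx with rfl | hx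
    · rw [hd0]
    · exact hdm1 x hx
  intro β
  constructor
  · -- forward direction: elements of O are minimal
    intro hβO
    have hβΔₐ := hOsub hβO
    refine ⟨hΔₐΦ β hβΔₐ, hsζ β hβO, ?_⟩
    rintro γ hγΦ hsγ ⟨c, hc⟩
    obtain ⟨g, hg, hgle⟩ := hcanon γ hγΦ
    have hkle : ∑ x ∈ O, g x ≤ d := by
      rw [hd]; exact Finset.sum_le_sum fun x hx => hgle x (hOsub hx)
    have hkζ : ζ ^ (∑ x ∈ O, g x) = ζ := by rw [← hsval g, ← hg]; exact hsγ
    have hk := hmod _ hkle hkζ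
    set F : V → ℚ := fun x => ((if x = β then (1:ℕ) else 0 : ℕ) : ℚ) with hF
    set G : V → ℚ := fun x => (g x : ℚ) + ((if x ∈ O then 0 else c x : ℕ) : ℚ) with hG
    have hsumeq : ∑ x ∈ Δₐ, F x • x = ∑ x ∈ Δₐ, G x • x := by
      rw [← hindic β hβΔₐ]
      have h2 : ∑ x ∈ Δₐ, G x • x
          = ∑ x ∈ Δₐ, (g x : ℚ) • x
            + ∑ x ∈ Δₐ, ((if x ∈ O then 0 else c x : ℕ) : ℚ) • x := by
        simp only [hG, add_smul, Finset.sum_add_distrib]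
      have h3 : ∑ x ∈ Δₐ, ((if x ∈ O then 0 else c x : ℕ) : ℚ) • x
          = ∑ x ∈ Δₐ \ O, (c x : ℚ) • x := by
        rw [← Finset.sum_sdiff hOsub]
        have e1 : ∑ x ∈ O, ((if x ∈ O then 0 else c x : ℕ) : ℚ) • x = 0 :=
          Finset.sum_eq_zero fun x hx => by simp [hx]
        have e2 : ∑ x ∈ Δₐ \ O, ((if x ∈ O then 0 else c x : ℕ) : ℚ) • x
            = ∑ x ∈ Δₐ \ O, (c x : ℚ) • x :=
          Finset.sum_congr rfl fun x hx => by
            rw [if_neg (Finset.mem_sdiff.mp hx).2]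
        rw [e1, e2, add_zero]
      rw [h2, h3, ← hg, ← hc]
      abel
    have ht := huniq F G hsumeq
    have hOsum : (1 : ℚ) - (∑ x ∈ O, g x : ℕ) = (F α₀ - G α₀) * d := by
      have e1 : ∑ x ∈ O, (F x - G x) = (F α₀ - G α₀) * d := by
        rw [Finset.sum_congr rfl fun x hx => ht x (hOsub hx), ← Finset.mul_sum]
        congr 1
        rw [hd]; push_cast; ring
      have e2 : ∑ x ∈ O, F x = 1 := by
        rw [hF]
        rw [Finset.sum_eq_single_of_mem β hβO (fun b _ hb => by simp [hb])]
        simp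
      have e3 : ∑ x ∈ O, G x = (∑ x ∈ O, g x : ℕ) := by
        simp only [hG]
        rw [Finset.sum_add_distrib]
        have : ∑ x ∈ O, ((if x ∈ O then 0 else c x : ℕ) : ℚ) = 0 :=
          Finset.sum_eq_zero fun x hx => by simp [hx]
        rw [this, add_zero]
        push_cast
        ring
      rw [← e2, ← e3, ← Finset.sum_sub_distrib]
      exact e1
    rcases hk with hk1 | ⟨hk0, hd1⟩
    · -- the generic case : the coordinate sum over O is 1, so t = 0
      rw [hk1] at hOsum
      have ht0 : F α₀ - G α₀ = 0 := by
        have hdne : (d : ℚ) ≠ 0 := by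
          exact_mod_cast Nat.pos_iff_ne_zero.mp hdpos
        have hz : (F α₀ - G α₀) * d = 0 := by push_cast at hOsum; linarith
        rcases mul_eq_zero.mp hz with h | h
        · exact h
        · exact absurd h hdne
      have hFG : ∀ x ∈ Δₐ, F x = G x := by
        intro x hx
        have := ht x hx
        rw [ht0, zero_mul] at this
        linarith
      have hgF : ∀ x ∈ Δₐ, (g x : ℚ) = F x := by
        intro x hx
        by_cases hxO : x ∈ O
        · have := hFG x hx
          rw [hG] at this
          simp only [if_pos hxO, Nat.cast_zero, add_zero] at this
          exact this.symm
        · have hxβ : x ≠ β := fun h => hxO (h ▸ hβO)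
          have hF0 : F x = 0 := by rw [hF]; simp [hxβ]
          have := hFG x hx
          rw [hG, hF0] at this
          simp only [if_neg hxO] at this
          have hg0 : (g x : ℚ) = 0 := by
            have h1 : (0:ℚ) ≤ (g x : ℚ) := Nat.cast_nonneg _
            have h2 : (0:ℚ) ≤ ((c x : ℕ) : ℚ) := Nat.cast_nonneg _
            linarith
          rw [hg0, hF0]
      rw [hg, hindic β hβΔₐ]
      exact Finset.sum_congr rfl fun x hx => by rw [hgF x hx]
    · -- the degenerate case d = 1, coordinate sum 0 : impossible
      exfalso
      rw [hk0, hd1] at hOsum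
      have ht1 : F α₀ - G α₀ = 1 := by push_cast at hOsum; linarith
      obtain ⟨δ, hδ⟩ := hΔne
      have hx : ∃ x, x ∈ Δₐ ∧ x ≠ β := by
        by_cases hβα₀ : β = α₀
        · exact ⟨δ, Finset.mem_insert_of_mem hδ, fun h => hα₀Δ (hβα₀ ▸ h ▸ hδ)⟩
        · exact ⟨α₀, Finset.mem_insert_self _ _, fun h => hβα₀ h.symm⟩
      obtain ⟨x, hxΔₐ, hxβ⟩ := hx
      have h1 := ht x hxΔₐ
      rw [ht1, one_mul] at h1
      have hF0 : F x = 0 := by rw [hF]; simp [hxβ]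
      have hG0 : (0:ℚ) ≤ G x := by
        rw [hG]
        positivity
      have hdm : (1:ℚ) ≤ (dm x : ℚ) := by exact_mod_cast hdmΔₐ x hxΔₐ
      rw [hF0] at h1
      linarith
  · -- backward direction: minimal elements lie in O
    rintro ⟨hβΦ, hsβ, hmin⟩
    obtain ⟨b, hb, hble⟩ := hcanon β hβΦ
    have hkle : ∑ x ∈ O, b x ≤ d := by
      rw [hd]; exact Finset.sum_le_sum fun x hx => hble x (hOsub hx)
    have hkζ : ζ ^ (∑ x ∈ O, b x) = ζ := by rw [← hsval b, ← hb]; exact hsβ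
    rcases hmod _ hkle hkζ with hk1 | ⟨hk0, hd1⟩
    · -- coordinate sum over O is 1
      have hex : ∃ α ∈ O, b α ≠ 0 := by
        by_contra h
        push_neg at h
        rw [Finset.sum_eq_zero h] at hk1
        exact one_ne_zero hk1.symm
      obtain ⟨α, hαO, hbα⟩ := hex
      have hbα1 : b α = 1 := by
        have h1 : b α ≤ ∑ x ∈ O, b x :=
          Finset.single_le_sum (fun x _ => Nat.zero_le _) hαO
        omega
      have hrest : ∀ x ∈ O, x ≠ α → b x = 0 := by
        intro x hx hne
        have h1 : b α + ∑ y ∈ O.erase α, b y = ∑ y ∈ O, b y :=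
          Finset.add_sum_erase O b hαO
        have h2 : b x ≤ ∑ y ∈ O.erase α, b y :=
          Finset.single_le_sum (fun y _ => Nat.zero_le _)
            (Finset.mem_erase.mpr ⟨hne, hx⟩)
        omega
      have hsplit : β - α = ∑ x ∈ Δₐ \ O, (b x : ℚ) • x := by
        have hOsump : ∑ x ∈ O, (b x : ℚ) • x = α := by
          rw [Finset.sum_eq_single_of_mem α hαO
            (fun x hx hne => by rw [hrest x hx hne]; simp)]
          rw [hbα1]; simp
        rw [hb, ← Finset.sum_sdiff hOsub, hOsump]
        abel
      have := hmin α (hΔₐΦ α (hOsub hαO)) (hsζ α hαO) ⟨b, hsplit⟩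
      exact this ▸ hαO
    · -- degenerate case : d = 1 and the coordinate sum over O is 0
      have hbO : ∀ x ∈ O, b x = 0 := by
        intro x hx
        exact (Finset.sum_eq_zero_iff.mp hk0) x hx
      obtain ⟨α, hαO⟩ := hOne
      have hOsingle : O = {α} := by
        refine Finset.eq_singleton_iff_unique_mem.mpr ⟨hαO, ?_⟩
        intro y hy
        have hcard : O.card ≤ 1 := by
          have h1 : O.card = ∑ x ∈ O, 1 := by simp
          have h2 : ∑ x ∈ O, 1 ≤ ∑ x ∈ O, dm x :=
            Finset.sum_le_sum fun x hx => hdmΔₐ x (hOsub hx)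
          omega
        exact Finset.card_le_one.mp hcard y hy α hαO
      have hdmα : dm α = 1 := by
        rw [hOsingle] at hd
        simp at hd
        omega
      have hnegα : -α = ∑ x ∈ Δₐ \ O, (dm x : ℚ) • x := by
        have h0 := hrel
        rw [← Finset.sum_sdiff hOsub, hOsingle, Finset.sum_singleton, hdmα,
          Nat.cast_one, one_smul] at h0
        rw [← hOsingle] at h0
        exact neg_eq_of_add_eq_zero_left h0
      have hsplit : β - α = ∑ x ∈ Δₐ \ O, ((b x + dm x : ℕ) : ℚ) • x := by
        have hβeq : β = ∑ x ∈ Δₐ \ O, (b x : ℚ) • x := by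
          have hz : ∑ x ∈ O, (b x : ℚ) • x = 0 :=
            Finset.sum_eq_zero fun x hx => by rw [hbO x hx]; simp
          rw [hb, ← Finset.sum_sdiff hOsub, hz, add_zero]
        have hsum : ∑ x ∈ Δₐ \ O, ((b x + dm x : ℕ) : ℚ) • x
            = ∑ x ∈ Δₐ \ O, (b x : ℚ) • x + ∑ x ∈ Δₐ \ O, (dm x : ℚ) • x := by
          rw [← Finset.sum_add_distrib]
          exact Finset.sum_congr rfl fun x _ => by push_cast; rw [add_smul]
        rw [hsum, ← hβeq, ← hnegα]
        abel
      have := hmin α (hΔₐΦ α (hOsub hαO)) (hsζ α hαO) ⟨fun x => b x + dm x, hsplit⟩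
      exact this ▸ hαO
end

section
/- Let Φ be an irreducible root system with base Δ, lowest root α₀, marks d(α), and let 𝒪 ⊆ Δ_a be nonempty. Set d = Σ_{α ∈ 𝒪} d(α) and define s ∈ Hom(ℤΦ, ℂ×) by α(s) = 1 for α ∈ Δ \ (𝒪 ∩ Δ) and α(s) = ζ_d for α ∈ 𝒪 ∩ Δ. Let Σ₀ be the set of roots that are ℤ-linear combinations of Δ_a \ 𝒪, and Σ₀⁺ (resp. Σ₀⁻) those with all coefficients ≥ 0 (resp. ≤ 0). Then {α ∈ Φ : α(s) = 1} = Σ₀ = Σ₀⁺ ∪ Σ₀⁻. -/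
open Finset

variable {V : Type*} [AddCommGroup V] [Module ℚ V]

section AuxStmt11

set_option linter.unusedSectionVars false

lemma aux_s_zero (s : V → ℂˣ) (hs : ∀ x y : V, s (x + y) = s x * s y) : s 0 = 1 := by
  have h := hs 0 0
  simp only [add_zero] at h
  exact (left_eq_mul.mp h)

lemma aux_s_neg (s : V → ℂˣ) (hs : ∀ x y : V, s (x + y) = s x * s y) (x : V) :
    s (-x) = (s x)⁻¹ := by
  have h := hs x (-x)
  rw [add_neg_cancel, aux_s_zero s hs] at h
  exact eq_inv_of_mul_eq_one_right h.symm

lemma aux_s_sum (s : V → ℂˣ) (hs : ∀ x y : V, s (x + y) = s x * s y)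
    (T : Finset V) (f : V → V) : s (∑ x ∈ T, f x) = ∏ x ∈ T, s (f x) := by
  induction T using Finset.cons_induction with
  | empty => simpa using aux_s_zero s hs
  | cons a T ha ih => rw [Finset.sum_cons, Finset.prod_cons, hs, ih]

lemma aux_s_nsmul (s : V → ℂˣ) (hs : ∀ x y : V, s (x + y) = s x * s y) (n : ℕ) (x : V) :
    s ((n : ℚ) • x) = s x ^ n := by
  induction n with
  | zero => simpa using aux_s_zero s hs
  | succ m ih =>
      have h : ((m + 1 : ℕ) : ℚ) • x = (m : ℚ) • x + x := by push_cast; module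
      rw [h, hs, ih, pow_succ]

lemma aux_s_zsmul (s : V → ℂˣ) (hs : ∀ x y : V, s (x + y) = s x * s y) (n : ℤ) (x : V) :
    s ((n : ℚ) • x) = s x ^ n := by
  cases n with
  | ofNat m => simpa using aux_s_nsmul s hs m x
  | negSucc m =>
      have h : ((Int.negSucc m : ℤ) : ℚ) • x = -(((m + 1 : ℕ) : ℚ) • x) := by
        push_cast; module
      rw [h, aux_s_neg s hs, aux_s_nsmul s hs, zpow_negSucc]

lemma aux_coeff_eq {Δ : Finset V}
    (hli : LinearIndependent ℚ (fun a : {x : V // x ∈ Δ} => (a : V)))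
    (a b : V → ℚ) (h : ∑ α ∈ Δ, a α • α = ∑ α ∈ Δ, b α • α) :
    ∀ α ∈ Δ, a α = b α := by
  rw [linearIndependent_iff'] at hli
  intro α hα
  have h0 : ∑ i : {x : V // x ∈ Δ}, (a i - b i) • (i : V) = 0 := by
    rw [Finset.sum_coe_sort Δ (fun x => (a x - b x) • x)]
    simp only [sub_smul, Finset.sum_sub_distrib, h, sub_self]
  have := hli Finset.univ (fun i => a i - b i) h0 ⟨α, hα⟩ (Finset.mem_univ _)
  linarith [sub_eq_zero.mp this]

end AuxStmt11

/-- With $s$ determined by $\mathcal{O}$ via its values on $\Delta$, the set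
$\{\alpha \in \Phi : \alpha(s) = 1\}$ equals the set $\Sigma_0$ of roots that are
$\mathbb{Z}$-combinations of $\Delta_a\setminus\mathcal{O}$, and
$\Sigma_0 = \Sigma_0^+ \cup \Sigma_0^-$. -/
theorem stmt_11 {V : Type*} [AddCommGroup V] [Module ℚ V] [DecidableEq V]
    (R : RootSystemData V) (Δ : Finset V) (hΔ : R.IsBase Δ)
    (θ : V) (hθ : R.IsHighest Δ θ)
    (α₀ : V) (hα₀ : α₀ = -θ) (hα₀Δ : α₀ ∉ Δ)
    (dm : V → ℕ) (hd0 : dm α₀ = 1) (hdθ : θ = ∑ α ∈ Δ, (dm α : ℚ) • α)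
    (O : Finset V) (hOsub : O ⊆ insert α₀ Δ) (hOne : O.Nonempty)
    (d : ℕ) (hd : d = ∑ α ∈ O, dm α)
    (ζ : ℂˣ) (hζ : IsPrimitiveRoot ζ d)
    (s : V → ℂˣ) (hs : ∀ x y : V, s (x + y) = s x * s y)
    (hs1 : ∀ α ∈ Δ, α ∉ O → s α = 1)
    (hsζ : ∀ α ∈ Δ, α ∈ O → s α = ζ) :
    {β : V | β ∈ R.Φ ∧ s β = 1} =
      {β : V | β ∈ R.Φ ∧ ∃ c : V → ℤ, β = ∑ x ∈ insert α₀ Δ \ O, (c x : ℚ) • x} ∧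
    {β : V | β ∈ R.Φ ∧ ∃ c : V → ℤ, β = ∑ x ∈ insert α₀ Δ \ O, (c x : ℚ) • x} =
      {β : V | β ∈ R.Φ ∧ ∃ c : V → ℕ, β = ∑ x ∈ insert α₀ Δ \ O, (c x : ℚ) • x} ∪
      {β : V | β ∈ R.Φ ∧ ∃ c : V → ℕ, β = -∑ x ∈ insert α₀ Δ \ O, (c x : ℚ) • x} := by
  -- scratch: develop the `have`s here
  have hOerase : Δ ∩ O = O.erase α₀ := by
    ext x
    simp only [mem_inter, mem_erase]
    constructor
    · rintro ⟨hxΔ, hxO⟩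
      exact ⟨fun h => hα₀Δ (h ▸ hxΔ), hxO⟩
    · rintro ⟨hne, hxO⟩
      rcases Finset.mem_insert.mp (hOsub hxO) with h | h
      · exact absurd h hne
      · exact ⟨h, hxO⟩
  have scombo : ∀ c : V → ℕ, s (∑ α ∈ Δ, (c α : ℚ) • α) = ζ ^ (∑ α ∈ Δ ∩ O, c α) := by
    intro c
    rw [aux_s_sum s hs, ← Finset.prod_inter_mul_prod_diff Δ O]
    have h1 : ∏ α ∈ Δ ∩ O, s ((c α : ℚ) • α) = ζ ^ (∑ α ∈ Δ ∩ O, c α) := by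
      rw [← Finset.prod_pow_eq_pow_sum]
      refine Finset.prod_congr rfl fun α hα => ?_
      rw [aux_s_nsmul s hs, hsζ α (mem_inter.mp hα).1 (mem_inter.mp hα).2]
    have h2 : ∏ α ∈ Δ \ O, s ((c α : ℚ) • α) = 1 :=
      Finset.prod_eq_one fun α hα => by
        rw [aux_s_nsmul s hs, hs1 α (mem_sdiff.mp hα).1 (mem_sdiff.mp hα).2, one_pow]
    rw [h1, h2, mul_one]
  have sθ : s θ = ζ ^ (∑ α ∈ O.erase α₀, dm α) := by
    rw [hdθ, scombo dm, hOerase]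
  have sα₀_val : s α₀ = (ζ ^ (∑ α ∈ O.erase α₀, dm α))⁻¹ := by
    have h : s α₀ = (s θ)⁻¹ := by rw [hα₀, aux_s_neg s hs]
    rw [h, sθ]
  have sDa1 : ∀ x ∈ insert α₀ Δ, x ∉ O → s x = 1 := by
    intro x hx hxO
    rcases mem_insert.mp hx with rfl | hxΔ
    · rw [sα₀_val, Finset.erase_eq_of_notMem hxO, ← hd, hζ.pow_eq_one, inv_one]
    · exact hs1 x hxΔ hxO
  have sα₀ζ : α₀ ∈ O → s α₀ = ζ := by
    intro h
    have hd' : d = 1 + ∑ α ∈ O.erase α₀, dm α := by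
      rw [hd, ← Finset.add_sum_erase O dm h, hd0]
    have hone : ζ * ζ ^ (∑ α ∈ O.erase α₀, dm α) = 1 := by
      have := hζ.pow_eq_one
      rwa [hd', pow_add, pow_one] at this
    rw [sα₀_val]
    exact (eq_inv_of_mul_eq_one_left hone).symm
  have hnegmem : ∀ β ∈ R.Φ, -β ∈ R.Φ := by
    intro β hβ
    have h := R.reflect_mem β hβ β hβ
    rw [R.coroot_self β hβ] at h
    have h2 : β - (2 : ℚ) • β = -β := by module
    rwa [h2] at h
  have main : ∀ β ∈ R.Φ, s β = 1 → (∃ c : V → ℕ, β = ∑ α ∈ Δ, (c α : ℚ) • α) →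
      (∃ c : V → ℕ, β = ∑ x ∈ insert α₀ Δ \ O, (c x : ℚ) • x) ∨
      (∃ c : V → ℕ, β = -∑ x ∈ insert α₀ Δ \ O, (c x : ℚ) • x) := by
    rintro β hβ hsβ ⟨c, hc⟩
    obtain ⟨e, he⟩ := hθ.2 β ⟨hβ, c, hc⟩
    have hdm : ∀ α ∈ Δ, dm α = c α + e α := by
      intro α hα
      have hsum : ∑ α ∈ Δ, (dm α : ℚ) • α = ∑ α ∈ Δ, ((c α : ℚ) + (e α : ℚ)) • α := by
        calc ∑ α ∈ Δ, (dm α : ℚ) • α = θ := hdθ.symm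
          _ = β + (θ - β) := by abel
          _ = ∑ α ∈ Δ, (c α : ℚ) • α + ∑ α ∈ Δ, (e α : ℚ) • α := by rw [← hc, ← he]
          _ = ∑ α ∈ Δ, ((c α : ℚ) + (e α : ℚ)) • α := by
              rw [← Finset.sum_add_distrib]
              exact Finset.sum_congr rfl fun α _ => by rw [add_smul]
      have := aux_coeff_eq hΔ.2.1 _ _ hsum α hα
      exact_mod_cast this
    have hsk : s β = ζ ^ (∑ α ∈ Δ ∩ O, c α) := by rw [hc, scombo]
    have hdvd : d ∣ ∑ α ∈ Δ ∩ O, c α := by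
      rw [← hζ.pow_eq_one_iff_dvd, ← hsk]
      exact hsβ
    have hkle : ∑ α ∈ Δ ∩ O, c α ≤ ∑ α ∈ Δ ∩ O, dm α :=
      Finset.sum_le_sum fun α hα => by
        rw [hdm α (mem_inter.mp hα).1]; exact Nat.le_add_right _ _
    by_cases hα₀O : α₀ ∈ O
    · -- case α₀ ∈ O
      have hDaO : insert α₀ Δ \ O = Δ \ O := by
        ext x
        simp only [mem_sdiff, mem_insert]
        constructor
        · rintro ⟨h1 | h1, h2⟩
          · exact absurd (h1 ▸ hα₀O) h2
          · exact ⟨h1, h2⟩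
        · rintro ⟨h1, h2⟩
          exact ⟨Or.inr h1, h2⟩
      have hd' : d = 1 + ∑ α ∈ O.erase α₀, dm α := by
        rw [hd, ← Finset.add_sum_erase O dm hα₀O, hd0]
      have hk0 : ∑ α ∈ Δ ∩ O, c α = 0 := by
        refine Nat.eq_zero_of_dvd_of_lt hdvd ?_
        calc ∑ α ∈ Δ ∩ O, c α ≤ ∑ α ∈ Δ ∩ O, dm α := hkle
          _ = ∑ α ∈ O.erase α₀, dm α := by rw [hOerase]
          _ < d := by omega
      left
      refine ⟨c, ?_⟩
      rw [hDaO, hc]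
      refine (Finset.sum_subset Finset.sdiff_subset fun x hx hnx => ?_).symm
      have hxO : x ∈ Δ ∩ O := by
        simp only [mem_sdiff, hx, true_and, not_not] at hnx
        exact mem_inter.mpr ⟨hx, hnx⟩
      rw [Finset.sum_eq_zero_iff.mp hk0 x hxO]
      simp
    · -- case α₀ ∉ O
      have hODelta : O ⊆ Δ := fun x hx =>
        (mem_insert.mp (hOsub hx)).resolve_left fun h => hα₀O (h ▸ hx)
      have hΔO : Δ ∩ O = O := Finset.inter_eq_right.mpr hODelta
      have hmd : ∑ α ∈ Δ ∩ O, dm α = d := by rw [hΔO, hd]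
      have hDaO : insert α₀ Δ \ O = insert α₀ (Δ \ O) := by
        ext x
        simp only [mem_sdiff, mem_insert]
        constructor
        · rintro ⟨h1 | h1, h2⟩
          exacts [Or.inl h1, Or.inr ⟨h1, h2⟩]
        · rintro (rfl | ⟨h1, h2⟩)
          exacts [⟨Or.inl rfl, hα₀O⟩, ⟨Or.inr h1, h2⟩]
      have hα₀nmem : α₀ ∉ Δ \ O := fun h => hα₀Δ (mem_sdiff.mp h).1
      rcases Nat.lt_or_ge (∑ α ∈ Δ ∩ O, c α) d with hlt | hge
      · -- k = 0
        have hk0 : ∑ α ∈ Δ ∩ O, c α = 0 := Nat.eq_zero_of_dvd_of_lt hdvd hlt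
        left
        refine ⟨fun x => if x = α₀ then 0 else c x, ?_⟩
        rw [hDaO, Finset.sum_insert hα₀nmem]
        beta_reduce
        have h0 : (if α₀ = α₀ then (0 : ℕ) else c α₀) = 0 := if_pos rfl
        rw [h0, Nat.cast_zero, zero_smul, zero_add]
        have hsum : ∑ x ∈ Δ \ O, ((if x = α₀ then (0 : ℕ) else c x : ℕ) : ℚ) • x
            = ∑ x ∈ Δ \ O, (c x : ℚ) • x :=
          Finset.sum_congr rfl fun x hx => by
            have hne : x ≠ α₀ := fun h => hα₀Δ (h ▸ (mem_sdiff.mp hx).1)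
            rw [if_neg hne]
        rw [hsum, hc]
        refine (Finset.sum_subset Finset.sdiff_subset fun x hx hnx => ?_).symm
        have hxO : x ∈ Δ ∩ O := by
          simp only [mem_sdiff, hx, true_and, not_not] at hnx
          exact mem_inter.mpr ⟨hx, hnx⟩
        rw [Finset.sum_eq_zero_iff.mp hk0 x hxO]
        simp
      · -- k = d
        have hkd : ∑ α ∈ O, c α = d := by
          rw [← hΔO]
          exact le_antisymm (hkle.trans_eq hmd) hge
        have heO : ∀ α ∈ O, e α = 0 := by
          have h1 : ∑ α ∈ O, dm α = ∑ α ∈ O, c α + ∑ α ∈ O, e α := by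
            rw [← Finset.sum_add_distrib]
            exact Finset.sum_congr rfl fun α hα => hdm α (hODelta hα)
          have hsume : ∑ α ∈ O, e α = 0 := by omega
          exact fun α hα => Finset.sum_eq_zero_iff.mp hsume α hα
        have h3 : θ - β = ∑ x ∈ Δ \ O, (e x : ℚ) • x := by
          rw [he]
          refine (Finset.sum_subset Finset.sdiff_subset fun x hx hnx => ?_).symm
          have hxO : x ∈ O := by
            simp only [mem_sdiff, hx, true_and, not_not] at hnx
            exact hnx
          rw [heO x hxO]
          simp
        have hβeq : β = -α₀ - ∑ x ∈ Δ \ O, (e x : ℚ) • x := by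
          rw [hα₀, ← h3]
          abel
        right
        refine ⟨fun x => if x = α₀ then 1 else e x, ?_⟩
        rw [hDaO, Finset.sum_insert hα₀nmem]
        beta_reduce
        have h0 : (if α₀ = α₀ then (1 : ℕ) else e α₀) = 1 := if_pos rfl
        rw [h0, Nat.cast_one, one_smul]
        have hsum : ∑ x ∈ Δ \ O, ((if x = α₀ then (1 : ℕ) else e x : ℕ) : ℚ) • x
            = ∑ x ∈ Δ \ O, (e x : ℚ) • x :=
          Finset.sum_congr rfl fun x hx => by
            have hne : x ≠ α₀ := fun h => hα₀Δ (h ▸ (mem_sdiff.mp hx).1)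
            rw [if_neg hne]
        rw [hsum, hβeq]
        abel
  have h4 : ∀ β ∈ R.Φ, s β = 1 →
      (∃ c : V → ℕ, β = ∑ x ∈ insert α₀ Δ \ O, (c x : ℚ) • x) ∨
      (∃ c : V → ℕ, β = -∑ x ∈ insert α₀ Δ \ O, (c x : ℚ) • x) := by
    intro β hβ hsβ
    rcases hΔ.2.2 β hβ with hpos | ⟨c, hcneg⟩
    · exact main β hβ hsβ hpos
    · have hγ : -β ∈ R.Φ := hnegmem β hβ
      have hsγ : s (-β) = 1 := by rw [aux_s_neg s hs, hsβ, inv_one]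
      have hγpos : ∃ c : V → ℕ, -β = ∑ α ∈ Δ, (c α : ℚ) • α := ⟨c, by rw [hcneg, neg_neg]⟩
      rcases main (-β) hγ hsγ hγpos with ⟨c', hc'⟩ | ⟨c', hc'⟩
      · exact Or.inr ⟨c', by rw [← hc', neg_neg]⟩
      · exact Or.inl ⟨c', neg_injective (by rw [hc'])⟩
  have hS0s : ∀ β : V, (∃ c : V → ℤ, β = ∑ x ∈ insert α₀ Δ \ O, (c x : ℚ) • x) → s β = 1 := by
    rintro β ⟨c, hc⟩
    rw [hc, aux_s_sum s hs]
    refine Finset.prod_eq_one fun x hx => ?_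
    rw [aux_s_zsmul s hs, sDa1 x (mem_sdiff.mp hx).1 (mem_sdiff.mp hx).2, one_zpow]
  have castsum : ∀ (c : V → ℕ),
      ∑ x ∈ insert α₀ Δ \ O, (((c x : ℤ) : ℤ) : ℚ) • x = ∑ x ∈ insert α₀ Δ \ O, (c x : ℚ) • x :=
    fun c => Finset.sum_congr rfl fun x _ => by norm_num
  have castsumneg : ∀ (c : V → ℕ),
      ∑ x ∈ insert α₀ Δ \ O, ((-(c x : ℤ) : ℤ) : ℚ) • x
        = -∑ x ∈ insert α₀ Δ \ O, (c x : ℚ) • x := by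
    intro c
    rw [← Finset.sum_neg_distrib]
    exact Finset.sum_congr rfl fun x _ => by push_cast; rw [neg_smul]
  have hZ : ∀ β : V,
      ((∃ c : V → ℕ, β = ∑ x ∈ insert α₀ Δ \ O, (c x : ℚ) • x) ∨
       (∃ c : V → ℕ, β = -∑ x ∈ insert α₀ Δ \ O, (c x : ℚ) • x)) →
      ∃ c : V → ℤ, β = ∑ x ∈ insert α₀ Δ \ O, (c x : ℚ) • x := by
    rintro β (⟨c, hc⟩ | ⟨c, hc⟩)
    · exact ⟨fun x => (c x : ℤ), by rw [hc, castsum]⟩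
    · exact ⟨fun x => -(c x : ℤ), by rw [hc, castsumneg]⟩
  constructor
  · ext β
    simp only [Set.mem_setOf_eq]
    constructor
    · rintro ⟨hβ, hsβ⟩
      exact ⟨hβ, hZ β (h4 β hβ hsβ)⟩
    · rintro ⟨hβ, hc⟩
      exact ⟨hβ, hS0s β hc⟩
  · ext β
    simp only [Set.mem_setOf_eq, Set.mem_union]
    constructor
    · rintro ⟨hβ, hc⟩
      rcases h4 β hβ (hS0s β hc) with h | h
      exacts [Or.inl ⟨hβ, h⟩, Or.inr ⟨hβ, h⟩]
    · rintro (⟨hβ, hc⟩ | ⟨hβ, hc⟩)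
      · exact ⟨hβ, hZ β (Or.inl hc)⟩
      · exact ⟨hβ, hZ β (Or.inr hc)⟩
end

section
/- Let Γ be a group, Γ₁ ≤ Γ of finite index, W₁ a Γ₁-group, and W = I_{Γ₁}^Γ(W₁) the induced Γ-group. Then the map β ↦ (τ ↦ β(τ)(e)) induces a bijection (Shapiro isomorphism) H¹(Γ, I_{Γ₁}^Γ(W₁)) → H¹(Γ₁, W₁) on nonabelian first cohomology sets. -/
/-- The induced `Γ`-group `W = I_{Γ₁}^Γ(W₁)`: functions `v : Γ → W₁` with
`v (γ₁ * γ) = γ₁ • v γ`. -/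
def indCarrier {Γ : Type*} [Group Γ] (Γ₁ : Subgroup Γ) (W₁ : Type*) [Group W₁]
    [MulDistribMulAction Γ₁ W₁] : Set (Γ → W₁) :=
  {v | ∀ (g₁ : Γ₁) (g : Γ), v ((g₁ : Γ) * g) = g₁ • v g}

/-- The `Γ`-action on the induced group, by right translation. -/
def actInd {Γ W₁ : Type*} [Group Γ] (σ : Γ) (v : Γ → W₁) : Γ → W₁ := fun γ => v (γ * σ)

/-- A (nonabelian) `1`-cocycle of `Γ` valued in the induced group `W`. -/
def IsCocycleInd {Γ : Type*} [Group Γ] (Γ₁ : Subgroup Γ) (W₁ : Type*) [Group W₁]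
    [MulDistribMulAction Γ₁ W₁] (c : Γ → Γ → W₁) : Prop :=
  (∀ σ : Γ, c σ ∈ indCarrier Γ₁ W₁) ∧ ∀ σ τ : Γ, c (σ * τ) = c σ * actInd σ (c τ)

/-- Two cocycles valued in the induced group are cohomologous. -/
def CohomologousInd {Γ : Type*} [Group Γ] (Γ₁ : Subgroup Γ) (W₁ : Type*) [Group W₁]
    [MulDistribMulAction Γ₁ W₁] (c c' : Γ → Γ → W₁) : Prop :=
  ∃ m ∈ indCarrier Γ₁ W₁, ∀ σ : Γ, c' σ = m⁻¹ * c σ * actInd σ m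

/-- A (nonabelian) `1`-cocycle of `Γ₁` valued in `W₁`. -/
def IsCocycleOne {Γ : Type*} [Group Γ] (Γ₁ : Subgroup Γ) {W₁ : Type*} [Group W₁]
    [MulDistribMulAction Γ₁ W₁] (c : Γ₁ → W₁) : Prop :=
  ∀ σ τ : Γ₁, c (σ * τ) = c σ * σ • c τ

/-- Two cocycles of `Γ₁` valued in `W₁` are cohomologous. -/
def CohomologousOne {Γ : Type*} [Group Γ] {Γ₁ : Subgroup Γ} {W₁ : Type*} [Group W₁]
    [MulDistribMulAction Γ₁ W₁] (c c' : Γ₁ → W₁) : Prop :=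
  ∃ m : W₁, ∀ σ : Γ₁, c' σ = m⁻¹ * c σ * σ • m

/-- The Shapiro map: evaluate a `W`-valued cocycle at the identity of `Γ`. -/
def shapiro {Γ W₁ : Type*} [Group Γ] (Γ₁ : Subgroup Γ) (c : Γ → Γ → W₁) : Γ₁ → W₁ :=
  fun τ => c ↑τ 1

/-- Shapiro's lemma for nonabelian first cohomology: the map
`c ↦ (τ ↦ c τ (e))` induces a bijection
`H¹(Γ, I_{Γ₁}^Γ(W₁)) ≃ H¹(Γ₁, W₁)`: it sends cocycles to cocycles, two cocycles are
cohomologous iff their images are, and every `W₁`-valued cocycle of `Γ₁` arises up to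
cohomology. -/
theorem stmt_16 {Γ W₁ : Type*} [Group Γ] [Group W₁] (Γ₁ : Subgroup Γ)
    [Γ₁.FiniteIndex] [MulDistribMulAction Γ₁ W₁] :
    (∀ c : Γ → Γ → W₁, IsCocycleInd Γ₁ W₁ c → IsCocycleOne Γ₁ (shapiro Γ₁ c)) ∧
    (∀ c c' : Γ → Γ → W₁, IsCocycleInd Γ₁ W₁ c → IsCocycleInd Γ₁ W₁ c' →
      (CohomologousInd Γ₁ W₁ c c' ↔ CohomologousOne (shapiro Γ₁ c) (shapiro Γ₁ c'))) ∧
    (∀ c₁ : Γ₁ → W₁, IsCocycleOne Γ₁ c₁ →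
      ∃ c : Γ → Γ → W₁, IsCocycleInd Γ₁ W₁ c ∧ CohomologousOne (shapiro Γ₁ c) c₁) := by

  constructor
  · -- shapiro sends cocycles to cocycles
    rintro c ⟨hmem, hcoc⟩ σ τ
    have h1 : c (↑σ * ↑τ) 1 = c ↑σ 1 * c ↑τ (1 * ↑σ) := congrFun (hcoc ↑σ ↑τ) 1
    have h2 : c ↑τ ((↑σ : Γ) * 1) = σ • c ↑τ 1 := hmem ↑τ σ 1
    simp only [shapiro, Subgroup.coe_mul, h1, one_mul]
    rw [mul_one] at h2
    rw [h2]
  constructor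
  · -- cohomologous iff images are
    rintro c c' ⟨hmem, hcoc⟩ ⟨hmem', hcoc'⟩
    constructor
    · rintro ⟨m, hm, hrel⟩
      refine ⟨m 1, fun τ => ?_⟩
      have h1 : c' ↑τ 1 = (m 1)⁻¹ * c ↑τ 1 * m (1 * ↑τ) := congrFun (hrel ↑τ) 1
      have h2 : m ((↑τ : Γ) * 1) = τ • m 1 := hm τ 1
      rw [mul_one] at h2
      rw [one_mul, h2] at h1
      simpa [shapiro] using h1
    · rintro ⟨m₀, hm₀⟩
      set a : Γ → W₁ := fun γ => c γ 1 with ha_def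
      set a' : Γ → W₁ := fun γ => c' γ 1 with ha'_def
      have key : ∀ σ γ : Γ, c σ γ = (a γ)⁻¹ * a (γ * σ) := by
        intro σ γ
        have := congrFun (hcoc γ σ) 1
        simp only [Pi.mul_apply, actInd, one_mul] at this
        rw [ha_def]; simp only []
        rw [this]; group
      have key' : ∀ σ γ : Γ, c' σ γ = (a' γ)⁻¹ * a' (γ * σ) := by
        intro σ γ
        have := congrFun (hcoc' γ σ) 1
        simp only [Pi.mul_apply, actInd, one_mul] at this
        rw [ha'_def]; simp only []
        rw [this]; group
      have ha : ∀ (g₁ : Γ₁) (γ : Γ), a (↑g₁ * γ) = shapiro Γ₁ c g₁ * g₁ • a γ := by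
        intro g₁ γ
        have h1 : c (↑g₁ * γ) 1 = c ↑g₁ 1 * c γ (1 * ↑g₁) := congrFun (hcoc ↑g₁ γ) 1
        have h2 : c γ ((↑g₁ : Γ) * 1) = g₁ • c γ 1 := hmem γ g₁ 1
        rw [mul_one] at h2
        rw [one_mul, h2] at h1
        exact h1
      have ha' : ∀ (g₁ : Γ₁) (γ : Γ), a' (↑g₁ * γ) = shapiro Γ₁ c' g₁ * g₁ • a' γ := by
        intro g₁ γ
        have h1 : c' (↑g₁ * γ) 1 = c' ↑g₁ 1 * c' γ (1 * ↑g₁) := congrFun (hcoc' ↑g₁ γ) 1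
        have h2 : c' γ ((↑g₁ : Γ) * 1) = g₁ • c' γ 1 := hmem' γ g₁ 1
        rw [mul_one] at h2
        rw [one_mul, h2] at h1
        exact h1
      refine ⟨fun γ => (a γ)⁻¹ * m₀ * a' γ, ?_, ?_⟩
      · intro g₁ γ
        show (a (↑g₁ * γ))⁻¹ * m₀ * a' (↑g₁ * γ) = g₁ • ((a γ)⁻¹ * m₀ * a' γ)
        rw [ha g₁ γ, ha' g₁ γ, hm₀ g₁]
        simp only [smul_mul', smul_inv']
        group
      · intro σ
        funext γ
        simp only [Pi.mul_apply, Pi.inv_apply, actInd, key, key']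
        group
  · -- surjectivity up to cohomology
    intro c₁ hc₁
    classical
    set q : Γ → Γ := fun γ => (Quotient.mk (QuotientGroup.rightRel Γ₁) γ).out with hq_def
    have hq : ∀ γ : Γ, γ * (q γ)⁻¹ ∈ Γ₁ := by
      intro γ
      have h := Quotient.exact (Quotient.out_eq (Quotient.mk (QuotientGroup.rightRel Γ₁) γ))
      exact (QuotientGroup.rightRel_apply).mp h
    have hq2 : ∀ (g₁ : Γ₁) (γ : Γ), q (↑g₁ * γ) = q γ := by
      intro g₁ γ
      have : (Quotient.mk (QuotientGroup.rightRel Γ₁) (↑g₁ * γ)) =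
          Quotient.mk (QuotientGroup.rightRel Γ₁) γ := by
        exact Quotient.sound (QuotientGroup.rightRel_apply.mpr (by
          simp [mul_assoc]))
      simp only [hq_def, this]
    set h : Γ → Γ₁ := fun γ => ⟨γ * (q γ)⁻¹, hq γ⟩ with hh_def
    have hh : ∀ (g₁ : Γ₁) (γ : Γ), h (↑g₁ * γ) = g₁ * h γ := by
      intro g₁ γ
      ext
      simp [hh_def, hq2, mul_assoc]
    set a : Γ → W₁ := fun γ => c₁ (h γ) with ha_def
    have ha : ∀ (g₁ : Γ₁) (γ : Γ), a (↑g₁ * γ) = c₁ g₁ * g₁ • a γ := by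
      intro g₁ γ
      simp only [ha_def, hh g₁ γ, hc₁ g₁ (h γ)]
    refine ⟨fun σ γ => (a γ)⁻¹ * a (γ * σ), ⟨?_, ?_⟩, ?_⟩
    · intro σ g₁ γ
      show (a (↑g₁ * γ))⁻¹ * a (↑g₁ * γ * σ) = g₁ • ((a γ)⁻¹ * a (γ * σ))
      rw [mul_assoc, ha g₁ γ, ha g₁ (γ * σ)]
      simp only [smul_mul', smul_inv']
      group
    · intro σ τ
      funext γ
      simp only [Pi.mul_apply, actInd, ← mul_assoc]
      group
    · refine ⟨(a 1)⁻¹, fun τ => ?_⟩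
      have h1 : a ↑τ = c₁ τ * τ • a 1 := by
        have := ha τ 1
        rwa [mul_one] at this
      show c₁ τ = ((a 1)⁻¹)⁻¹ * ((a 1)⁻¹ * a ((1 : Γ) * ↑τ)) * τ • (a 1)⁻¹
      rw [one_mul, h1, smul_inv']
      group
end
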